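/- For every κ ∈ (0,2) there exists a constant c > 0 such that the second derivative of the Rényi entropy function satisfies η_κ''(t) ≤ −c for all t ∈ (0,1). In particular, for κ ∈ (1,2) and p := κ − 1 ∈ (0,1), the function g_p(t) := p[t(1−t)]^{p−1} − [t^p − (1−t)^p]² satisfies g_p(t) ≥ (1 − M_p)·2^{1−p} > 0 for all t ∈ (0,1), where M_p := 2^{-p} if 0 < p < 1/2 and M_p := 2^{p−1} if 1/2 ≤ p < 1. -/

import Mathlib

noncomputable section

/-- The Rényi entropy function `η_κ` on `(0,1)` (extended by `0` elsewhere). -/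
def eta (κ : ℝ) (t : ℝ) : ℝ :=
  if t ∈ Set.Ioo (0 : ℝ) 1 then
    (if κ = 1 then -(t * Real.log t) - (1 - t) * Real.log (1 - t)
     else (1 - κ)⁻¹ * Real.log (t ^ κ + (1 - t) ^ κ))
  else 0

/-- `g_p(t) = p [t(1−t)]^{p−1} − [t^p − (1−t)^p]²`. -/
def gFun (p t : ℝ) : ℝ := p * (t * (1 - t)) ^ (p - 1) - (t ^ p - (1 - t) ^ p) ^ 2

/-- `M_p = 2^{-p}` for `0 < p < 1/2` and `M_p = 2^{p−1}` for `1/2 ≤ p < 1`. -/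
def Mconst (p : ℝ) : ℝ := if p < 1 / 2 then (2 : ℝ) ^ (-p) else (2 : ℝ) ^ (p - 1)

open Real Set Filter Topology

/-! ### Part 2 : lower bound for `gFun` -/

lemma Mconst_lt_one {p : ℝ} (hp0 : 0 < p) (hp1 : p < 1) : Mconst p < 1 := by
  unfold Mconst
  split_ifs with h
  · exact Real.rpow_lt_one_of_one_lt_of_neg one_lt_two (by linarith)
  · exact Real.rpow_lt_one_of_one_lt_of_neg one_lt_two (by linarith)

lemma G0_pos {p : ℝ} (hp0 : 0 < p) (hp1 : p < 1) : 0 < (1 - Mconst p) * (2 : ℝ) ^ (1 - p) := by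
  have h1 := Mconst_lt_one hp0 hp1
  have h2 : (0:ℝ) < (2 : ℝ) ^ (1 - p) := Real.rpow_pos_of_pos two_pos _
  nlinarith

lemma key1 {p s : ℝ} (hp0 : 0 < p) (hp1 : p < 1) (hs0 : 0 < s) (hs : s ≤ 1/4) :
    (2:ℝ) ^ (1 - p) ≤ p * s ^ (p - 1) + 2 * s ^ p := by
  set w : ℝ := 2 * s with hw
  have hw0 : 0 < w := by positivity
  have hw1 : w ≤ 1 := by simp only [hw]; linarith
  have hgm : w ^ (1 - p) * 1 ^ p ≤ (1 - p) * w + p * 1 :=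
    Real.geom_mean_le_arith_mean2_weighted (by linarith) hp0.le hw0.le zero_le_one (by ring)
  rw [Real.one_rpow, mul_one, mul_one] at hgm
  have hkey : 1 ≤ w ^ (p - 1) * (p + w) := by
    have h1 : w ^ (1 - p) ≤ p + w := by nlinarith
    have h2 : w ^ (p - 1) * w ^ (1 - p) = 1 := by
      rw [← Real.rpow_add hw0]; norm_num
    calc (1:ℝ) = w ^ (p - 1) * w ^ (1 - p) := h2.symm
      _ ≤ w ^ (p - 1) * (p + w) := by
          have := Real.rpow_pos_of_pos hw0 (p - 1)
          nlinarith
  have hs_eq : s = w / 2 := by rw [hw]; ring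
  have hsp1 : s ^ (p - 1) = w ^ (p - 1) * (2:ℝ) ^ (1 - p) := by
    rw [hs_eq, div_eq_mul_inv, Real.mul_rpow hw0.le (by positivity),
      ← Real.rpow_neg_one (2:ℝ), ← Real.rpow_mul (by norm_num : (0:ℝ) ≤ 2)]
    congr 1
    ring_nf
  have hsp : s ^ p = s ^ (p - 1) * s := by
    rw [← Real.rpow_add_one hs0.ne' (p-1)]; ring_nf
  rw [hsp, hsp1]
  have h2p : (0:ℝ) < (2:ℝ) ^ (1 - p) := Real.rpow_pos_of_pos two_pos _
  have : p * (w ^ (p - 1) * (2:ℝ)^(1-p)) + 2 * (w ^ (p - 1) * (2:ℝ)^(1-p) * s)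
      = (2:ℝ)^(1-p) * (w ^ (p-1) * (p + w)) := by rw [hs_eq]; ring
  rw [this]
  nlinarith

lemma key2 {p t : ℝ} (hp0 : 0 < p) (hp1 : p < 1) (ht0 : 0 < t) (ht1 : t < 1) :
    t ^ (2*p) + (1 - t) ^ (2*p) ≤ Mconst p * (2:ℝ) ^ (1 - p) := by
  have h1t : 0 < 1 - t := by linarith
  unfold Mconst
  split_ifs with h
  · have hq0 : 0 < 2*p := by linarith
    have hq1 : 2*p < 1 := by linarith
    have hcc := (Real.strictConcaveOn_rpow hq0 hq1).concaveOn
    have := hcc.2 (Set.mem_Ici.2 ht0.le) (Set.mem_Ici.2 h1t.le)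
      (by norm_num : (0:ℝ) ≤ 1/2) (by norm_num : (0:ℝ) ≤ 1/2) (by norm_num)
    simp only [smul_eq_mul] at this
    have heq : (1/2 : ℝ) * t + (1/2) * (1 - t) = 1/2 := by ring
    rw [heq] at this
    have hhalf : ((1:ℝ)/2) ^ (2*p) = (2:ℝ)^(-(2*p)) := by
      rw [one_div, ← Real.rpow_neg_one (2:ℝ), ← Real.rpow_mul (by norm_num : (0:ℝ) ≤ 2)]
      congr 1; ring
    have hM : (2:ℝ) ^ (-p) * (2:ℝ) ^ (1 - p) = 2 * (2:ℝ)^(-(2*p)) := by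
      rw [← Real.rpow_add two_pos]
      nth_rewrite 2 [show (2:ℝ) = (2:ℝ)^(1:ℝ) by norm_num]
      rw [← Real.rpow_add two_pos]
      congr 1; ring
    rw [hM]
    linarith [this, hhalf]
  · have h2p : (1:ℝ) ≤ 2*p := by push_neg at h; linarith
    have hta : t ^ (2*p) ≤ t ^ (1:ℝ) := Real.rpow_le_rpow_of_exponent_ge ht0 ht1.le h2p
    have htb : (1-t) ^ (2*p) ≤ (1-t) ^ (1:ℝ) :=
      Real.rpow_le_rpow_of_exponent_ge h1t (by linarith) h2p
    rw [Real.rpow_one] at hta htb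
    have hM : (2:ℝ) ^ (p-1) * (2:ℝ) ^ (1 - p) = 1 := by
      rw [← Real.rpow_add two_pos]; norm_num
    rw [hM]; linarith

lemma gFun_lower {p t : ℝ} (hp0 : 0 < p) (hp1 : p < 1) (ht0 : 0 < t) (ht1 : t < 1) :
    (1 - Mconst p) * (2:ℝ) ^ (1 - p) ≤ gFun p t := by
  have h1t : 0 < 1 - t := by linarith
  set s : ℝ := t * (1 - t) with hs
  have hs0 : 0 < s := by positivity
  have hs14 : s ≤ 1/4 := by nlinarith [sq_nonneg (t - 1/2), hs]
  have hmul : t ^ p * (1-t) ^ p = s ^ p := (Real.mul_rpow ht0.le h1t.le).symm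
  have ht2p : t ^ (2*p) = (t ^ p)^2 := by
    rw [mul_comm, Real.rpow_mul ht0.le, Real.rpow_two]
  have ht2p' : (1-t) ^ (2*p) = ((1-t) ^ p)^2 := by
    rw [mul_comm, Real.rpow_mul h1t.le, Real.rpow_two]
  have hsq : (t ^ p - (1 - t) ^ p) ^ 2 = t^(2*p) + (1-t)^(2*p) - 2 * s^p := by
    rw [ht2p, ht2p', ← hmul]; ring
  have hsp : s ^ p = s ^ (p-1) * s := by
    rw [← Real.rpow_add_one hs0.ne' (p-1)]; ring_nf
  have hk1 := key1 hp0 hp1 hs0 hs14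
  have hk2 := key2 hp0 hp1 ht0 ht1
  unfold gFun
  rw [← hs, hsq]
  nlinarith [hk1, hk2]

/-! ### Part 1 : second-derivative computations -/

lemma deriv_deriv_congr {f g : ℝ → ℝ} (h : ∀ x ∈ Ioo (0:ℝ) 1, f x = g x) {t : ℝ}
    (ht : t ∈ Ioo (0:ℝ) 1) : deriv (deriv f) t = deriv (deriv g) t := by
  have h1 : ∀ x ∈ Ioo (0:ℝ) 1, deriv f x = deriv g x := fun x hx =>
    Filter.EventuallyEq.deriv_eq (Filter.eventuallyEq_of_mem (isOpen_Ioo.mem_nhds hx) h)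
  exact Filter.EventuallyEq.deriv_eq (Filter.eventuallyEq_of_mem (isOpen_Ioo.mem_nhds ht) h1)

lemma deriv_deriv_eq {f f' : ℝ → ℝ} (h : ∀ x ∈ Ioo (0:ℝ) 1, HasDerivAt f (f' x) x) {t : ℝ}
    (ht : t ∈ Ioo (0:ℝ) 1) : deriv (deriv f) t = deriv f' t := by
  have h1 : ∀ x ∈ Ioo (0:ℝ) 1, deriv f x = f' x := fun x hx => (h x hx).deriv
  exact Filter.EventuallyEq.deriv_eq (Filter.eventuallyEq_of_mem (isOpen_Ioo.mem_nhds ht) h1)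

lemma hasDerivAt_one_sub (x : ℝ) : HasDerivAt (fun y : ℝ => 1 - y) (-1) x := by
  exact (hasDerivAt_id x).const_sub 1

lemma eta_one_deriv2 {t : ℝ} (ht : t ∈ Ioo (0:ℝ) 1) :
    deriv (deriv (eta 1)) t = -(1 - t)⁻¹ - t⁻¹ := by
  have ht0 := ht.1; have ht1 := ht.2
  have h1t : 0 < 1 - t := by linarith
  have heq : ∀ x ∈ Ioo (0:ℝ) 1, eta 1 x =
      (fun y => -(y * Real.log y) - (1 - y) * Real.log (1 - y)) x := by
    intro x hx; simp [eta, hx]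
  have hD1 : ∀ x ∈ Ioo (0:ℝ) 1, HasDerivAt
      (fun y => -(y * Real.log y) - (1 - y) * Real.log (1 - y))
      ((fun y => Real.log (1 - y) - Real.log y) x) x := by
    intro x hx
    obtain ⟨hx0, hx1⟩ := hx
    have h1x : 0 < 1 - x := by linarith
    have ha : HasDerivAt (fun y : ℝ => y * Real.log y) (Real.log x + 1) x :=
      Real.hasDerivAt_mul_log hx0.ne'
    have hb : HasDerivAt (fun y : ℝ => (1 - y) * Real.log (1 - y))
        ((Real.log (1 - x) + 1) * (-1)) x :=
      (Real.hasDerivAt_mul_log h1x.ne').comp x (hasDerivAt_one_sub x)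
    have : HasDerivAt (fun y => -(y * Real.log y) - (1 - y) * Real.log (1 - y)) _ x := ha.neg.sub hb
    convert this using 1
    ring
  rw [deriv_deriv_congr heq ht, deriv_deriv_eq hD1 ht]
  have ha : HasDerivAt (fun y : ℝ => Real.log (1 - y)) ((1 - t)⁻¹ * (-1)) t :=
    (Real.hasDerivAt_log h1t.ne').comp t (hasDerivAt_one_sub t)
  have hb : HasDerivAt Real.log t⁻¹ t := Real.hasDerivAt_log ht0.ne'
  have : deriv (fun y => Real.log (1 - y) - Real.log y) t = _ := (ha.sub hb).deriv
  rw [this]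
  ring

lemma eta_ne_one_deriv2 {κ : ℝ} (hκ1 : κ ≠ 1) {t : ℝ} (ht : t ∈ Ioo (0:ℝ) 1) :
    deriv (deriv (eta κ)) t =
      (1 - κ)⁻¹ * (((κ * ((κ-1) * t ^ (κ-2)) - κ * ((κ-1) * (1-t) ^ (κ-2) * (-1)))
          * (t ^ κ + (1-t) ^ κ)
        - (κ * t ^ (κ-1) - κ * (1-t) ^ (κ-1)) * (κ * t ^ (κ-1) - κ * (1-t) ^ (κ-1)))
        / (t ^ κ + (1-t) ^ κ) ^ 2) := by
  have ht0 := ht.1; have ht1 := ht.2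
  have h1t : 0 < 1 - t := by linarith
  set F : ℝ → ℝ := fun y => (1 - κ)⁻¹ * Real.log (y ^ κ + (1 - y) ^ κ) with hF
  set F1 : ℝ → ℝ := fun y =>
    (1 - κ)⁻¹ * ((κ * y ^ (κ-1) - κ * (1-y) ^ (κ-1)) / (y ^ κ + (1-y) ^ κ)) with hF1
  have heq : ∀ x ∈ Ioo (0:ℝ) 1, eta κ x = F x := by
    intro x hx; simp only [eta, if_pos hx, if_neg hκ1, hF]
  have hfd : ∀ x : ℝ, x ∈ Ioo (0:ℝ) 1 → HasDerivAt (fun y => y ^ κ + (1-y) ^ κ)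
      (κ * x ^ (κ-1) - κ * (1-x) ^ (κ-1)) x := by
    intro x hx
    obtain ⟨hx0, hx1⟩ := hx
    have h1x : 0 < 1 - x := by linarith
    have ha : HasDerivAt (fun y : ℝ => y ^ κ) (κ * x ^ (κ-1)) x :=
      Real.hasDerivAt_rpow_const (Or.inl hx0.ne')
    have hb : HasDerivAt (fun y : ℝ => (1-y) ^ κ) (κ * (1-x) ^ (κ-1) * (-1)) x :=
      (Real.hasDerivAt_rpow_const (Or.inl h1x.ne')).comp x (hasDerivAt_one_sub x)
    have : HasDerivAt (fun y => y ^ κ + (1-y) ^ κ) _ x := ha.add hb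
    convert this using 1
    ring
  have hfpos : ∀ x : ℝ, x ∈ Ioo (0:ℝ) 1 → 0 < x ^ κ + (1-x) ^ κ := by
    intro x hx
    exact add_pos (Real.rpow_pos_of_pos hx.1 κ) (Real.rpow_pos_of_pos (by linarith [hx.2]) κ)
  have hD1 : ∀ x ∈ Ioo (0:ℝ) 1, HasDerivAt F (F1 x) x := by
    intro x hx
    exact ((hfd x hx).log (hfpos x hx).ne').const_mul _
  rw [deriv_deriv_congr heq ht, deriv_deriv_eq hD1 ht]
  have ha2 : HasDerivAt (fun y : ℝ => y ^ (κ-1)) ((κ-1) * t ^ (κ-2)) t := by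
    have := Real.hasDerivAt_rpow_const (p := κ-1) (Or.inl ht0.ne')
    rwa [show κ - 1 - 1 = κ - 2 by ring] at this
  have hb2 : HasDerivAt (fun y : ℝ => (1-y) ^ (κ-1)) ((κ-1) * (1-t) ^ (κ-2) * (-1)) t := by
    have h := (Real.hasDerivAt_rpow_const (p := κ-1) (Or.inl h1t.ne')).comp t (hasDerivAt_one_sub t)
    rwa [show κ - 1 - 1 = κ - 2 by ring] at h
  have hN : HasDerivAt (fun y : ℝ => κ * y ^ (κ-1) - κ * (1-y) ^ (κ-1))
      (κ * ((κ-1) * t ^ (κ-2)) - κ * ((κ-1) * (1-t) ^ (κ-2) * (-1))) t :=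
    (ha2.const_mul κ).sub (hb2.const_mul κ)
  have hdiv := (hN.div (hfd t ⟨ht0, ht1⟩) (hfpos t ⟨ht0, ht1⟩).ne').const_mul ((1-κ)⁻¹)
  exact hdiv.deriv

/-! ### Bounds on the second derivative -/

lemma rpow_facts {κ t : ℝ} (hκ0 : 0 < κ) (ht0 : 0 < t) (ht1 : t < 1) :
    t ^ (κ-1) = t ^ (κ-2) * t ∧ (1-t) ^ (κ-1) = (1-t) ^ (κ-2) * (1-t) ∧
    t ^ κ = t ^ (κ-2) * t^2 ∧ (1-t) ^ κ = (1-t) ^ (κ-2) * (1-t)^2 := by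
  have h1t : 0 < 1 - t := by linarith
  refine ⟨?_, ?_, ?_, ?_⟩
  · rw [show κ-1 = (κ-2)+1 by ring, Real.rpow_add_one ht0.ne']
  · rw [show κ-1 = (κ-2)+1 by ring, Real.rpow_add_one h1t.ne']
  · rw [show κ = (κ-2)+2 by ring, Real.rpow_add ht0, Real.rpow_two]; norm_num
  · rw [show κ = (κ-2)+2 by ring, Real.rpow_add h1t, Real.rpow_two]; norm_num

lemma ab_lower {κ t : ℝ} (hκ2 : κ < 2) (ht0 : 0 < t) (ht1 : t < 1) :
    (4:ℝ) ^ (2-κ) ≤ t ^ (κ-2) * (1-t) ^ (κ-2) := by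
  have h1t : 0 < 1 - t := by linarith
  have h14 : ((1:ℝ)/4) ^ (κ-2) = (4:ℝ) ^ (2-κ) := by
    rw [one_div, ← Real.rpow_neg_one (4:ℝ), ← Real.rpow_mul (by norm_num : (0:ℝ) ≤ 4)]
    congr 1; ring
  rw [← Real.mul_rpow ht0.le h1t.le, ← h14]
  exact Real.rpow_le_rpow_of_nonpos (by positivity) (by nlinarith [sq_nonneg (t - 1/2)])
    (by linarith)

lemma f_le_two {κ t : ℝ} (hκ0 : 0 < κ) (ht0 : 0 < t) (ht1 : t < 1) :
    t ^ κ + (1-t) ^ κ ≤ 2 := by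
  have h1t : 0 < 1 - t := by linarith
  have := Real.rpow_le_one ht0.le ht1.le hκ0.le
  have := Real.rpow_le_one h1t.le (by linarith) hκ0.le
  linarith

set_option maxHeartbeats 1000000 in
/-- For every `κ ∈ (0,2)` the second derivative of the Rényi entropy function satisfies
`η_κ'' ≤ −c` on `(0,1)` for some `c > 0`; moreover for `κ ∈ (1,2)` and `p = κ − 1`,
`g_p(t) ≥ (1 − M_p) 2^{1−p} > 0` on `(0,1)`. -/
theorem statement_19 (κ : ℝ) (hκ0 : 0 < κ) (hκ2 : κ < 2) :
    (∃ c : ℝ, 0 < c ∧ ∀ t ∈ Set.Ioo (0 : ℝ) 1, deriv (deriv (eta κ)) t ≤ -c) ∧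
    (1 < κ →
      (0 < (1 - Mconst (κ - 1)) * (2 : ℝ) ^ (1 - (κ - 1)) ∧
       ∀ t ∈ Set.Ioo (0 : ℝ) 1,
         (1 - Mconst (κ - 1)) * (2 : ℝ) ^ (1 - (κ - 1)) ≤ gFun (κ - 1) t)) := by
  constructor
  · -- second derivative bound
    rcases lt_trichotomy κ 1 with hlt | heq | hgt
    · -- 0 < κ < 1
      refine ⟨κ * (4:ℝ)^(2-κ) / 4, by positivity, fun t ht => ?_⟩
      have ht0 := ht.1; have ht1 := ht.2
      have h1t : 0 < 1 - t := by linarith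
      rw [eta_ne_one_deriv2 hlt.ne ht]
      obtain ⟨e1, e2, e3, e4⟩ := rpow_facts hκ0 ht0 ht1
      rw [e1, e2, e3, e4]
      set A : ℝ := t ^ (κ-2) with hA
      set B : ℝ := (1-t) ^ (κ-2) with hB
      have hApos : 0 < A := Real.rpow_pos_of_pos ht0 _
      have hBpos : 0 < B := Real.rpow_pos_of_pos h1t _
      have hab := ab_lower hκ2 ht0 ht1
      rw [← hA, ← hB] at hab
      have hfle : A * t^2 + B * (1-t)^2 ≤ 2 := by
        have := f_le_two hκ0 ht0 ht1
        rw [e3, e4] at this; exact this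
      have hfpos : 0 < A * t^2 + B * (1-t)^2 := by positivity
      clear_value A B
      have hc : (1-κ)⁻¹ * (κ-1) = -1 := by
        rw [inv_mul_eq_div, div_eq_iff (by linarith : (1:ℝ)-κ ≠ 0)]; ring
      have hcpos : 0 < (1-κ)⁻¹ := by
        apply inv_pos.2; linarith
      rw [mul_div_assoc']
      rw [div_le_iff₀ (by positivity : (0:ℝ) < (A * t^2 + B * (1-t)^2)^2)]
      have hQ : (0:ℝ) < (4:ℝ)^(2-κ) := Real.rpow_pos_of_pos (by norm_num) _
      have hnum : (1-κ)⁻¹ * ((κ * ((κ-1) * A) - κ * ((κ-1) * B * (-1))) * (A*t^2 + B*(1-t)^2)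
          - (κ * (A*t) - κ * (B*(1-t))) * (κ * (A*t) - κ * (B*(1-t))))
          = -κ * (A*B) - (1-κ)⁻¹ * κ * (A*t - B*(1-t))^2 := by
        linear_combination (κ * (A*B)) * hc
      rw [hnum]
      have hABQ : κ * (4:ℝ)^(2-κ) ≤ κ * (A*B) := mul_le_mul_of_nonneg_left hab hκ0.le
      have hsq : (A * t^2 + B * (1-t)^2)^2 ≤ 4 := by nlinarith [hfle, hfpos]
      have h1 : -κ * (A*B) - (1-κ)⁻¹ * κ * (A*t - B*(1-t))^2 ≤ -(κ * (4:ℝ)^(2-κ)) := by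
        nlinarith [mul_nonneg (mul_nonneg hcpos.le hκ0.le) (sq_nonneg (A*t - B*(1-t)))]
      have h2 : κ * (4:ℝ)^(2-κ) / 4 * (A * t^2 + B * (1-t)^2)^2 ≤ κ * (4:ℝ)^(2-κ) / 4 * 4 :=
        mul_le_mul_of_nonneg_left hsq (by positivity)
      nlinarith [h1, h2]
    · -- κ = 1
      subst heq
      refine ⟨4, by norm_num, fun t ht => ?_⟩
      have ht0 := ht.1; have ht1 := ht.2
      have h1t : 0 < 1 - t := by linarith
      rw [eta_one_deriv2 ht]
      have h1 : t * t⁻¹ = 1 := mul_inv_cancel₀ ht0.ne'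
      have h2 : (1-t) * (1-t)⁻¹ = 1 := mul_inv_cancel₀ h1t.ne'
      have h3 : 0 < t⁻¹ := by positivity
      have h4 : 0 < (1-t)⁻¹ := by positivity
      nlinarith [sq_nonneg (2*t - 1), mul_pos ht0 h1t, mul_pos h3 h4,
        sq_nonneg (t⁻¹ - (1-t)⁻¹)]
    · -- 1 < κ < 2
      have hp0 : 0 < κ - 1 := by linarith
      have hp1 : κ - 1 < 1 := by linarith
      set G : ℝ := (1 - Mconst (κ-1)) * (2:ℝ) ^ (1 - (κ-1)) with hG
      have hGpos : 0 < G := G0_pos hp0 hp1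
      clear_value G
      refine ⟨κ * G * (κ-1)⁻¹ / 4, by positivity, fun t ht => ?_⟩
      have ht0 := ht.1; have ht1 := ht.2
      have h1t : 0 < 1 - t := by linarith
      rw [eta_ne_one_deriv2 hgt.ne' ht]
      obtain ⟨e1, e2, e3, e4⟩ := rpow_facts hκ0 ht0 ht1
      have hgl := gFun_lower hp0 hp1 ht0 ht1
      rw [← hG] at hgl
      have hgF : gFun (κ-1) t = (κ-1) * (t^(κ-2) * (1-t)^(κ-2))
          - (t^(κ-2)*t - (1-t)^(κ-2)*(1-t))^2 := by
        unfold gFun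
        rw [show κ - 1 - 1 = κ - 2 by ring, Real.mul_rpow ht0.le h1t.le,
          show (κ:ℝ) - 1 = κ - 1 from rfl, e1, e2]
      rw [e1, e2, e3, e4]
      set A : ℝ := t ^ (κ-2) with hA
      set B : ℝ := (1-t) ^ (κ-2) with hB
      have hApos : 0 < A := Real.rpow_pos_of_pos ht0 _
      have hBpos : 0 < B := Real.rpow_pos_of_pos h1t _
      have hgl2 : G ≤ (κ-1) * (A*B) - (A*t - B*(1-t))^2 := by
        rw [hgF] at hgl; linarith [hgl]
      have hfle : A * t^2 + B * (1-t)^2 ≤ 2 := by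
        have := f_le_two hκ0 ht0 ht1
        rw [e3, e4] at this; exact this
      have hfpos : 0 < A * t^2 + B * (1-t)^2 := by positivity
      clear_value A B
      have hc : (1-κ)⁻¹ * (κ-1) = -1 := by
        rw [inv_mul_eq_div, div_eq_iff (by linarith : (1:ℝ)-κ ≠ 0)]; ring
      have hcinv : (1-κ)⁻¹ = -(κ-1)⁻¹ := by
        rw [show (1:ℝ)-κ = -(κ-1) by ring, inv_neg]
      have hinv : (κ-1) * (κ-1)⁻¹ = 1 := mul_inv_cancel₀ (by linarith)
      rw [mul_div_assoc']
      rw [div_le_iff₀ (by positivity : (0:ℝ) < (A * t^2 + B * (1-t)^2)^2)]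
      have hnum : (1-κ)⁻¹ * ((κ * ((κ-1) * A) - κ * ((κ-1) * B * (-1))) * (A*t^2 + B*(1-t)^2)
          - (κ * (A*t) - κ * (B*(1-t))) * (κ * (A*t) - κ * (B*(1-t))))
          = -(κ * (κ-1)⁻¹) * ((κ-1) * (A*B) - (A*t - B*(1-t))^2) := by
        rw [hcinv]
        have hne : (κ:ℝ) - 1 ≠ 0 := by linarith
        field_simp
        ring
      rw [hnum]
      have hKpos : 0 < κ * (κ-1)⁻¹ := by positivity
      have hsq : (A * t^2 + B * (1-t)^2)^2 ≤ 4 := by nlinarith [hfle, hfpos]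
      have hstep0 : κ * (κ-1)⁻¹ * G ≤ κ * (κ-1)⁻¹ * ((κ-1) * (A*B) - (A*t - B*(1-t))^2) :=
        mul_le_mul_of_nonneg_left hgl2 hKpos.le
      have h2 : κ * G * (κ-1)⁻¹ / 4 * (A * t^2 + B * (1-t)^2)^2 ≤ κ * G * (κ-1)⁻¹ / 4 * 4 :=
        mul_le_mul_of_nonneg_left hsq (by positivity)
      nlinarith [hstep0, h2]
  · -- the gFun bound
    intro hgt
    have hp0 : 0 < κ - 1 := by linarith
    have hp1 : κ - 1 < 1 := by linarith
    exact ⟨G0_pos hp0 hp1, fun t ht => gFun_lower hp0 hp1 ht.1 ht.2⟩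

end
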